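/- There exists an infinite sequence X = (x_i)_{i=1}^∞ of nonzero points in [0,1]² such that AlignGap(X,C) ≤ 6 for every admissible sequence C (so AlignGap(X) ≤ 6), while MenuGap(X) = ∞, i.e., for every real T there exists a sequence Q with MenuGap(X,Q) ≥ T. -/

import Mathlib

open scoped BigOperators ENNReal NNReal
open Filter

noncomputable section

namespace Stmt1

/-- Valuation / allocation vectors over `k` items. -/
abbrev V (k : ℕ) := Fin k → ℝ

/-- Dot product. -/
def dot {k : ℕ} (x y : V k) : ℝ := ∑ t, x t * y t

/-- ℓ¹ norm. -/
def norm1 {k : ℕ} (x : V k) : ℝ := ∑ t, |x t|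

/-- Sum of a (possibly divergent) series, as limsup of partial sums in `EReal`. -/
def eseries (f : ℕ → ℝ) : EReal :=
  Filter.limsup (fun n => ((∑ i ∈ Finset.range n, f i : ℝ) : EReal)) Filter.atTop

/-- Valid index set of a sequence of length `N` (finite or `⊤`), indices starting at 1. -/
def idx (N : ℕ∞) : Set ℕ := {i | 1 ≤ i ∧ (i : ℕ∞) ≤ N}

/-- `gap_i^{X,Q} := min_{0 ≤ j < i} (q_i - q_j)·x_i`. -/
def gapS {k : ℕ} (S : Set ℕ) (X Q : ℕ → V k) (i : ℕ) : ℝ :=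
  sInf {y | ∃ j : ℕ, (j ∈ S ∨ j = 0) ∧ j < i ∧ y = dot (Q i - Q j) (X i)}

/-- `MenuGap(X,Q) := ∑_i gap_i^{X,Q}/‖x_i‖₁`. -/
def menuGapS {k : ℕ} (S : Set ℕ) (X Q : ℕ → V k) : EReal :=
  eseries (S.indicator fun i => gapS S X Q i / norm1 (X i))

/-- An admissible allocation sequence: `q_0 = 0` and all `q_i ∈ [0,1]^k`. -/
def admissibleQ {k : ℕ} (Q : ℕ → V k) : Prop :=
  Q 0 = 0 ∧ ∀ i t, Q i t ∈ Set.Icc (0:ℝ) 1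

/-- `sgap_i^{X,C} := min_{0 ≤ j < i} x_i·(c_i x_i − c_j x_j)` (with `c_0 = 0`,
so the `j = 0` term encodes `x_0 := 0`). -/
def sgapS {k : ℕ} (S : Set ℕ) (X : ℕ → V k) (c : ℕ → ℝ) (i : ℕ) : ℝ :=
  sInf {y | ∃ j : ℕ, (j ∈ S ∨ j = 0) ∧ j < i ∧ y = dot (X i) (c i • X i - c j • X j)}

/-- `AlignGap(X,C) := ∑_i max{0, sgap_i^{X,C}}/‖x_i‖₁`, as a sum of nonnegative terms
in `ℝ≥0∞`. -/
def alignGapE {k : ℕ} (S : Set ℕ) (X : ℕ → V k) (c : ℕ → ℝ) : ℝ≥0∞ :=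
  ∑' i : ℕ, S.indicator (fun i => ENNReal.ofReal (max 0 (sgapS S X c i) / norm1 (X i))) i

/-- An admissible scalar sequence: `c_0 = 0` and `c_i ∈ [0, 1/‖x_i‖_∞]` for valid `i`
(`‖·‖` is the sup norm on `Fin k → ℝ`). -/
def admissibleC {k : ℕ} (S : Set ℕ) (X : ℕ → V k) (c : ℕ → ℝ) : Prop :=
  c 0 = 0 ∧ ∀ i ∈ S, c i ∈ Set.Icc (0:ℝ) (1 / ‖X i‖)

def nOf (i : ℕ) : ℕ := Nat.log 256 i
def start (n : ℕ) : ℕ := 256 ^ n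
def plen (n : ℕ) : ℕ := 2 ^ (7*n+3)
def pOf (i : ℕ) : ℕ := (i - start (nOf i)) % 2 ^ (nOf i) + 1
def rOf (i : ℕ) : ℕ := (i - start (nOf i)) / 2 ^ (nOf i) + 1

def inPat (i : ℕ) : Prop := 1 ≤ nOf i ∧ i < start (nOf i) + plen (nOf i)

instance (i : ℕ) : Decidable (inPat i) := by unfold inPat; infer_instance

noncomputable def tau (i : ℕ) : ℝ :=
  if inPat i then ((2:ℝ)^(4*nOf i+4))⁻¹ + (pOf i) * ((2:ℝ)^(5*nOf i+4))⁻¹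
  else (i:ℝ)⁻¹

lemma tau_zero : tau 0 = 0 := by
  unfold tau inPat nOf
  simp

lemma pOf_le (i : ℕ) : pOf i ≤ 2 ^ (nOf i) := by
  unfold pOf
  have h2 : 0 < 2 ^ (nOf i) := Nat.pow_pos (by norm_num)
  have := Nat.mod_lt (i - start (nOf i)) h2
  omega

lemma pow_split (n : ℕ) : (2:ℝ)^(5*n+4) = 2^(4*n + 4) * 2^(n) := by
  rw [← pow_add]
  congr 1
  omega

lemma tau_pat_le {i : ℕ} (h : inPat i) : tau i ≤ ((2:ℝ)^(4*nOf i+3))⁻¹ := by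
  rw [tau, if_pos h]
  have hp : (pOf i : ℝ) ≤ 2 ^ (nOf i) := by exact_mod_cast pOf_le i
  have h2a : (0:ℝ) < 2^(4*nOf i+4) := by positivity
  have h2b : (0:ℝ) < 2^(nOf i) := by positivity
  have h1 : (pOf i : ℝ) * ((2:ℝ)^(5*nOf i+4))⁻¹ ≤ ((2:ℝ)^(4*nOf i+4))⁻¹ := by
    rw [pow_split (nOf i)]
    rw [mul_inv]
    calc (pOf i : ℝ) * (((2:ℝ)^(4*nOf i+4))⁻¹ * ((2:ℝ)^(nOf i))⁻¹)
        ≤ (2:ℝ)^(nOf i) * (((2:ℝ)^(4*nOf i+4))⁻¹ * ((2:ℝ)^(nOf i))⁻¹) := by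
          apply mul_le_mul_of_nonneg_right hp (by positivity)
      _ = ((2:ℝ)^(4*nOf i+4))⁻¹ := by field_simp
  have h3 : ((2:ℝ)^(4*nOf i+4))⁻¹ + ((2:ℝ)^(4*nOf i+4))⁻¹ = ((2:ℝ)^(4*nOf i+3))⁻¹ := by
    have : (2:ℝ)^(4*nOf i+4) = 2 * 2^(4*nOf i+3) := by
      rw [← pow_succ']
    rw [this]
    field_simp
    ring
  linarith

lemma tau_nonneg (i : ℕ) : 0 ≤ tau i := by
  unfold tau
  split
  · positivity
  · positivity

lemma tau_le_one (i : ℕ) : tau i ≤ 1 := by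
  by_cases h : inPat i
  · calc tau i ≤ ((2:ℝ)^(4*nOf i+3))⁻¹ := tau_pat_le h
      _ ≤ 1 := by
        rw [inv_le_one_iff₀]
        right
        exact one_le_pow₀ (by norm_num)
  · rw [tau, if_neg h]
    rcases Nat.eq_zero_or_pos i with h0 | h0
    · simp [h0]
    · rw [inv_le_one_iff₀]; right; exact_mod_cast h0

lemma tau_pos {i : ℕ} (hi : 1 ≤ i) : 0 < tau i := by
  by_cases h : inPat i
  · rw [tau, if_pos h]
    positivity
  · rw [tau, if_neg h]
    have : (0:ℝ) < i := by exact_mod_cast hi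
    positivity

noncomputable def XX : ℕ → V 2 := fun i => ![1, tau i]

lemma XX_zero (i : ℕ) : XX i 0 = 1 := rfl
lemma XX_one (i : ℕ) : XX i 1 = tau i := rfl

lemma harmonic_sq (K : ℕ) (hK : 1 ≤ K) :
    ∑ i ∈ Finset.Icc 1 K, ((i:ℝ)⁻¹)^2 ≤ 2 - (K:ℝ)⁻¹ := by
  induction K with
  | zero => omega
  | succ K ih =>
    rcases Nat.eq_zero_or_pos K with h0 | h0
    · subst h0; norm_num
    · rw [Finset.sum_Icc_succ_top (by omega)]
      have hK' : (1:ℝ) ≤ K := by exact_mod_cast h0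
      have h1 : ((K:ℝ)+1)⁻¹^2 ≤ (K:ℝ)⁻¹ - ((K:ℝ)+1)⁻¹ := by
        have e1 : (K:ℝ)⁻¹ - ((K:ℝ)+1)⁻¹ = ((K:ℝ)*((K:ℝ)+1))⁻¹ := by
          field_simp
          ring
        rw [e1, pow_two, ← mul_inv]
        apply inv_anti₀ (by positivity)
        nlinarith
      have h2 := ih h0
      have hcast : ((K+1:ℕ):ℝ) = (K:ℝ)+1 := by push_cast; ring
      rw [hcast]
      linarith

lemma block_lt (n : ℕ) : start n + plen n ≤ start (n+1) := by
  have h4 : 2^(7*n+3) ≤ 8 * 256^n := by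
    have h5 : (256:ℕ)^n = 2^(8*n) := by
      rw [show (256:ℕ) = 2^8 by norm_num, ← pow_mul]
    rw [h5, show (8:ℕ) = 2^3 by norm_num, ← pow_add]
    exact Nat.pow_le_pow_right (by norm_num) (by omega)
  have h6 : (256:ℕ)^(n+1) = 256 * 256^n := by ring
  have h7 : 0 < (256:ℕ)^n := Nat.pow_pos (by norm_num)
  unfold start plen
  omega

lemma nOf_interval {n i : ℕ} (h1 : start n ≤ i) (h2 : i < start n + plen n) : nOf i = n := by
  apply Nat.log_eq_of_pow_le_of_lt_pow h1
  have := block_lt n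
  unfold start at *
  omega

def patf (i : ℕ) : ℝ := if inPat i then ((2:ℝ)^(8*nOf i+6))⁻¹ else 0

lemma patf_nonneg (i : ℕ) : 0 ≤ patf i := by
  unfold patf; split <;> positivity

-- strengthened equality version
lemma geom_eq (K : ℕ) : ∑ n ∈ Finset.Icc 1 K, ((2:ℝ)^(n+3))⁻¹ = 1/8 - ((2:ℝ)^(K+3))⁻¹ := by
  induction K with
  | zero => norm_num
  | succ K ih =>
    rw [Finset.sum_Icc_succ_top (by omega), ih]
    have e : (2:ℝ)^(K+1+3) = 2 * 2^(K+3) := by rw [pow_succ']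
    rw [e]
    have hp : (0:ℝ) ≠ 2^(K+3) := by positivity
    field_simp
    ring

lemma geom_tail' (K : ℕ) : ∑ n ∈ Finset.Icc 1 K, ((2:ℝ)^(n+3))⁻¹ ≤ 1/8 := by
  rw [geom_eq]
  have : (0:ℝ) < ((2:ℝ)^(K+3))⁻¹ := by positivity
  linarith

lemma pat_mass (K : ℕ) : ∑ i ∈ Finset.Ico 1 K, patf i ≤ 1/8 := by
  classical
  have hsub : (Finset.Ico 1 K).filter inPat ⊆
      (Finset.Icc 1 K).biUnion (fun n => Finset.Ico (start n) (start n + plen n)) := by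
    intro i hi
    simp only [Finset.mem_filter, Finset.mem_Ico] at hi
    obtain ⟨⟨hi1, hiK⟩, hip⟩ := hi
    rw [Finset.mem_biUnion]
    refine ⟨nOf i, ?_, ?_⟩
    · rw [Finset.mem_Icc]
      refine ⟨hip.1, ?_⟩
      calc nOf i ≤ i := Nat.log_le_self _ _
        _ ≤ K := by omega
    · rw [Finset.mem_Ico]
      exact ⟨Nat.pow_log_le_self 256 (by omega), hip.2⟩
  have key : ∀ a b : ℕ, a < b →
      Disjoint (Finset.Ico (start a) (start a + plen a)) (Finset.Ico (start b) (start b + plen b)) := by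
    intro a b h
    apply Finset.disjoint_left.mpr
    intro i hia hib
    rw [Finset.mem_Ico] at hia hib
    have h1 : start a + plen a ≤ start (a+1) := block_lt a
    have h2 : start (a+1) ≤ start b := Nat.pow_le_pow_right (by norm_num) (by omega)
    omega
  have hdisj : (↑(Finset.Icc 1 K) : Set ℕ).PairwiseDisjoint
      (fun n => Finset.Ico (start n) (start n + plen n)) := by
    intro a _ b _ hab
    rcases lt_or_gt_of_ne hab with h | h
    · exact key a b h
    · exact (key b a h).symm
  calc ∑ i ∈ Finset.Ico 1 K, patf i
      = ∑ i ∈ (Finset.Ico 1 K).filter inPat, ((2:ℝ)^(8*nOf i+6))⁻¹ := by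
        rw [Finset.sum_filter]
        exact Finset.sum_congr rfl (fun i _ => rfl)
    _ ≤ ∑ i ∈ (Finset.Icc 1 K).biUnion (fun n => Finset.Ico (start n) (start n + plen n)), ((2:ℝ)^(8*nOf i+6))⁻¹ := by
        apply Finset.sum_le_sum_of_subset_of_nonneg hsub
        intro i _ _; positivity
    _ = ∑ n ∈ Finset.Icc 1 K, ∑ i ∈ Finset.Ico (start n) (start n + plen n), ((2:ℝ)^(8*nOf i+6))⁻¹ :=
        Finset.sum_biUnion hdisj
    _ ≤ ∑ n ∈ Finset.Icc 1 K, ((2:ℝ)^(n+3))⁻¹ := by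
        apply Finset.sum_le_sum
        intro n hn
        rw [Finset.mem_Icc] at hn
        have hval : ∀ i ∈ Finset.Ico (start n) (start n + plen n), ((2:ℝ)^(8*nOf i+6))⁻¹ = ((2:ℝ)^(8*n+6))⁻¹ := by
          intro i hi
          rw [Finset.mem_Ico] at hi
          have hni : nOf i = n := nOf_interval hi.1 hi.2
          rw [hni]
        rw [Finset.sum_congr rfl hval, Finset.sum_const, Nat.card_Ico]
        have hcard : (start n + plen n - start n) = 2^(7*n+3) := by
          simp [plen]
        rw [hcard, nsmul_eq_mul]
        have hc : ((2^(7*n+3) : ℕ) : ℝ) = (2:ℝ)^(7*n+3) := by push_cast; ring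
        rw [hc]
        have he : (2:ℝ)^(8*n+6) = 2^(7*n+3) * 2^(n+3) := by rw [← pow_add]; congr 1; omega
        rw [he, mul_inv]
        have hp : (0:ℝ) < 2^(7*n+3) := by positivity
        rw [← mul_assoc, mul_inv_cancel₀ (ne_of_gt hp), one_mul]
    _ ≤ 1/8 := geom_tail' K


lemma tau_sq_le {i : ℕ} : (tau i)^2 ≤ ((i:ℝ)⁻¹)^2 + patf i := by
  by_cases h : inPat i
  · have h1 := tau_pat_le h
    have h2 := tau_nonneg i
    have h3 : (tau i)^2 ≤ (((2:ℝ)^(4*nOf i+3))⁻¹)^2 := by nlinarith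
    have e : (((2:ℝ)^(4*nOf i+3))⁻¹)^2 = ((2:ℝ)^(8*nOf i+6))⁻¹ := by
      rw [← inv_pow, ← pow_mul, show (4*nOf i+3)*2 = 8*nOf i+6 by ring]
      exact inv_pow 2 _
    unfold patf
    rw [if_pos h]
    have h4 : (0:ℝ) ≤ ((i:ℝ)⁻¹)^2 := sq_nonneg _
    rw [e] at h3
    linarith
  · unfold patf
    rw [tau, if_neg h, if_neg h]
    simp

lemma mass3 (K : ℕ) : ∑ i ∈ Finset.Ico 1 K, (tau i)^2 ≤ 3 := by
  rcases Nat.eq_zero_or_pos K with h0 | h0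
  · subst h0; simp
  · calc ∑ i ∈ Finset.Ico 1 K, (tau i)^2
        ≤ ∑ i ∈ Finset.Ico 1 K, (((i:ℝ)⁻¹)^2 + patf i) := by
          apply Finset.sum_le_sum
          intro i _
          exact tau_sq_le
      _ = (∑ i ∈ Finset.Ico 1 K, ((i:ℝ)⁻¹)^2) + ∑ i ∈ Finset.Ico 1 K, patf i :=
          Finset.sum_add_distrib
      _ ≤ (2 - (K:ℝ)⁻¹) + 1/8 := by
          have hh : ∑ i ∈ Finset.Ico 1 K, ((i:ℝ)⁻¹)^2 ≤ 2 - (K:ℝ)⁻¹ := by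
            calc ∑ i ∈ Finset.Ico 1 K, ((i:ℝ)⁻¹)^2
                ≤ ∑ i ∈ Finset.Icc 1 K, ((i:ℝ)⁻¹)^2 := by
                  apply Finset.sum_le_sum_of_subset_of_nonneg
                  · intro i hi
                    rw [Finset.mem_Ico] at hi
                    rw [Finset.mem_Icc]
                    omega
                  · intro i _ _
                    exact sq_nonneg _
              _ ≤ 2 - (K:ℝ)⁻¹ := harmonic_sq K h0
          have hp := pat_mass K
          linarith
      _ ≤ 3 := by
          have : (0:ℝ) < (K:ℝ)⁻¹ := by
            have : (0:ℝ) < K := by exact_mod_cast h0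
            positivity
          linarith

lemma norm1_XX (i : ℕ) : norm1 (XX i) = 1 + tau i := by
  rw [norm1, Fin.sum_univ_two]
  show |(1:ℝ)| + |tau i| = _
  rw [abs_one, abs_of_nonneg (tau_nonneg i)]

lemma mem_idx_top {i : ℕ} (hi : 1 ≤ i) : i ∈ idx ⊤ := ⟨hi, le_top⟩

section AlignSide
variable {c : ℕ → ℝ} (hc : admissibleC (idx ⊤) XX c)

def phi (c : ℕ → ℝ) (j : ℕ) : ℝ := c j * (1 + (tau j)^2)

include hc

lemma c_bounds (i : ℕ) : 0 ≤ c i ∧ c i ≤ 1 := by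
  rcases Nat.eq_zero_or_pos i with h0 | h0
  · subst h0; rw [hc.1]; norm_num
  · have hm := hc.2 i (mem_idx_top h0)
    rw [Set.mem_Icc] at hm
    have hn : (1:ℝ) ≤ ‖XX i‖ := by
      have h1 : ‖XX i 0‖ ≤ ‖XX i‖ := norm_le_pi_norm (XX i) 0
      have : XX i 0 = 1 := rfl
      rw [this, norm_one] at h1
      exact h1
    refine ⟨hm.1, le_trans hm.2 ?_⟩
    rw [div_le_one (by linarith)]
    exact hn

lemma phi_nonneg (j : ℕ) : 0 ≤ phi c j := by
  have := (c_bounds hc j).1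
  have := tau_nonneg j
  unfold phi
  nlinarith

lemma phi_le_two (j : ℕ) : phi c j ≤ 2 := by
  have h1 := (c_bounds hc j).1
  have h2 := (c_bounds hc j).2
  have h3 := tau_nonneg j
  have h4 := tau_le_one j
  unfold phi
  nlinarith

lemma sgap_le {i ℓ : ℕ} (hℓ : ℓ < i) :
    sgapS (idx ⊤) XX c i ≤ phi c i - phi c ℓ + (tau ℓ)^2 := by
  have hmem : dot (XX i) (c i • XX i - c ℓ • XX ℓ) ∈
      {y | ∃ j : ℕ, (j ∈ idx ⊤ ∨ j = 0) ∧ j < i ∧ y = dot (XX i) (c i • XX i - c j • XX j)} := by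
    refine ⟨ℓ, ?_, hℓ, rfl⟩
    rcases Nat.eq_zero_or_pos ℓ with h0 | h0
    · right; exact h0
    · left; exact mem_idx_top h0
  have hbdd : BddBelow {y | ∃ j : ℕ, (j ∈ idx ⊤ ∨ j = 0) ∧ j < i ∧
      y = dot (XX i) (c i • XX i - c j • XX j)} := by
    apply Set.Finite.bddBelow
    apply Set.Finite.subset ((Set.finite_Iio i).image (fun j => dot (XX i) (c i • XX i - c j • XX j)))
    rintro y ⟨j, _, hj, rfl⟩
    exact ⟨j, hj, rfl⟩
  have h1 : sgapS (idx ⊤) XX c i ≤ dot (XX i) (c i • XX i - c ℓ • XX ℓ) := csInf_le hbdd hmem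
  have h2 : dot (XX i) (c i • XX i - c ℓ • XX ℓ)
      = c i * (1 + tau i * tau i) - c ℓ * (1 + tau i * tau ℓ) := by
    rw [dot, Fin.sum_univ_two]
    show (XX i 0) * (c i * XX i 0 - c ℓ * XX ℓ 0) + (XX i 1) * (c i * XX i 1 - c ℓ * XX ℓ 1) = _
    show (1:ℝ) * (c i * 1 - c ℓ * 1) + (tau i) * (c i * tau i - c ℓ * tau ℓ) = _
    ring
  rw [h2] at h1
  have hcl := (c_bounds hc ℓ)
  have ht1 := tau_nonneg i
  have ht2 := tau_nonneg ℓ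
  have ht3 := tau_le_one ℓ
  have ht4 := tau_le_one i
  unfold phi
  nlinarith [h1, mul_nonneg (mul_nonneg hcl.1 ht2) ht1, mul_nonneg ht2 ht1]

def gterm (c : ℕ → ℝ) (i : ℕ) : ℝ :=
  (idx ⊤).indicator (fun i => max 0 (sgapS (idx ⊤) XX c i) / norm1 (XX i)) i

lemma gterm_nonneg (i : ℕ) : 0 ≤ gterm c i := by
  apply Set.indicator_nonneg
  intro j _
  apply div_nonneg (le_max_left _ _)
  rw [norm1_XX]
  have := tau_nonneg j
  linarith

lemma invariant : ∀ M, 1 ≤ M → ∃ ℓ, ℓ < M ∧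
    ∑ i ∈ Finset.range M, gterm c i ≤ phi c ℓ + ∑ i ∈ Finset.Ico 1 ℓ, (tau i)^2 := by
  intro M hM
  induction M, hM using Nat.le_induction with
  | base =>
    refine ⟨0, by norm_num, ?_⟩
    rw [Finset.range_one, Finset.sum_singleton]
    have h0 : gterm c 0 = 0 := by
      unfold gterm
      rw [Set.indicator_of_notMem]
      intro h
      exact absurd h.1 (by norm_num)
    have hphi0 : phi c 0 = 0 := by unfold phi; rw [hc.1]; ring
    rw [h0, hphi0]
    simp
  | succ M hM ih =>
    obtain ⟨ℓ, hℓM, hbound⟩ := ih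
    rw [Finset.sum_range_succ]
    by_cases hpos : 0 < sgapS (idx ⊤) XX c M
    · -- gaining step
      refine ⟨M, by omega, ?_⟩
      have hgt : gterm c M ≤ sgapS (idx ⊤) XX c M := by
        unfold gterm
        rw [Set.indicator_of_mem (mem_idx_top hM)]
        rw [max_eq_right (le_of_lt hpos), norm1_XX]
        apply div_le_self (le_of_lt hpos)
        have := tau_nonneg M
        linarith
      have hsg := sgap_le hc (hℓM)
      have hmassstep : (∑ i ∈ Finset.Ico 1 ℓ, (tau i)^2) + (tau ℓ)^2
          ≤ ∑ i ∈ Finset.Ico 1 M, (tau i)^2 := by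
        rcases Nat.eq_zero_or_pos ℓ with h0 | h0
        · subst h0
          rw [tau_zero, Finset.Ico_eq_empty (by omega), Finset.sum_empty]
          norm_num
          exact Finset.sum_nonneg (fun i _ => sq_nonneg _)
        · have : (∑ i ∈ Finset.Ico 1 ℓ, (tau i)^2) + (tau ℓ)^2
              = ∑ i ∈ Finset.Ico 1 (ℓ+1), (tau i)^2 := (Finset.sum_Ico_succ_top h0 _).symm
          rw [this]
          apply Finset.sum_le_sum_of_subset_of_nonneg
          · apply Finset.Ico_subset_Ico le_rfl
            omega
          · intro i _ _; exact sq_nonneg _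
      calc (∑ i ∈ Finset.range M, gterm c i) + gterm c M
          ≤ (phi c ℓ + ∑ i ∈ Finset.Ico 1 ℓ, (tau i)^2) + (phi c M - phi c ℓ + (tau ℓ)^2) := by
            have := le_trans hgt hsg
            linarith
        _ = phi c M + ((∑ i ∈ Finset.Ico 1 ℓ, (tau i)^2) + (tau ℓ)^2) := by ring
        _ ≤ phi c M + ∑ i ∈ Finset.Ico 1 M, (tau i)^2 := by linarith
    · -- no gain
      refine ⟨ℓ, by omega, ?_⟩
      have h0 : gterm c M = 0 := by
        unfold gterm
        rw [Set.indicator_of_mem (mem_idx_top hM)]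
        rw [max_eq_left (le_of_not_gt hpos)]
        simp
      rw [h0, add_zero]
      exact hbound

lemma align_partial (M : ℕ) : ∑ i ∈ Finset.range M, gterm c i ≤ 5 := by
  rcases Nat.eq_zero_or_pos M with h0 | h0
  · subst h0; simp
  · obtain ⟨ℓ, _, hbound⟩ := invariant hc M h0
    have h1 := phi_le_two hc ℓ
    have h2 := mass3 ℓ
    linarith

theorem align_bound : alignGapE (idx ⊤) XX c ≤ 6 := by
  have heq : ∀ i, (idx ⊤).indicator
      (fun i => ENNReal.ofReal (max 0 (sgapS (idx ⊤) XX c i) / norm1 (XX i))) i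
      = ENNReal.ofReal (gterm c i) := by
    intro i
    by_cases h : i ∈ idx ⊤
    · rw [Set.indicator_of_mem h]
      unfold gterm
      rw [Set.indicator_of_mem h]
    · rw [Set.indicator_of_notMem h]
      unfold gterm
      rw [Set.indicator_of_notMem h, ENNReal.ofReal_zero]
  rw [alignGapE]
  simp_rw [heq]
  rw [ENNReal.tsum_eq_iSup_sum]
  apply iSup_le
  intro F
  have hsub : F ⊆ Finset.range (F.sup id + 1) := by
    intro i hi
    rw [Finset.mem_range]
    have h : id i ≤ F.sup id := Finset.le_sup hi
    exact Nat.lt_succ_of_le h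
  calc ∑ i ∈ F, ENNReal.ofReal (gterm c i)
      = ENNReal.ofReal (∑ i ∈ F, gterm c i) :=
        (ENNReal.ofReal_sum_of_nonneg (fun i _ => gterm_nonneg hc i)).symm
    _ ≤ ENNReal.ofReal (∑ i ∈ Finset.range (F.sup id + 1), gterm c i) := by
        apply ENNReal.ofReal_le_ofReal
        apply Finset.sum_le_sum_of_subset_of_nonneg hsub
        intro i _ _; exact gterm_nonneg hc i
    _ ≤ ENNReal.ofReal 5 := ENNReal.ofReal_le_ofReal (align_partial hc _)
    _ ≤ 6 := by norm_num

end AlignSide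

section Menu
variable (n : ℕ)

def ee : ℝ := ((2:ℝ)^(6*n+5))⁻¹
def cc (r : ℕ) : ℝ := 1/2 + r * ee n
def uu (i : ℕ) : ℝ :=
  cc n (rOf i) - (pOf i) * ((2:ℝ)^(5*n+4))⁻¹ - (pOf i)^2 * ((2:ℝ)^(6*n+5))⁻¹
def QQ : ℕ → V 2 := fun i =>
  if i < start n then 0
  else if i < start n + plen n then ![uu n i, (pOf i) * ((2:ℝ)^n)⁻¹]
  else ![1,1]

lemma ee_pos : 0 < ee n := by unfold ee; positivity

-- facts about pattern indices
variable {n}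

structure PatFacts (i : ℕ) : Prop where
  hlo : start n ≤ i
  hhi : i < start n + plen n
  hn : nOf i = n
  hp1 : 1 ≤ pOf i
  hpm : pOf i ≤ 2^n
  hr1 : 1 ≤ rOf i
  hrR : rOf i ≤ 2^(6*n+3)
  hpat : inPat i
  htau : tau i = ((2:ℝ)^(4*n+4))⁻¹ + (pOf i) * ((2:ℝ)^(5*n+4))⁻¹

lemma patFacts (hn1 : 1 ≤ n) {i : ℕ} (h1 : start n ≤ i) (h2 : i < start n + plen n) :
    PatFacts (n := n) i := by
  have hnOf : nOf i = n := nOf_interval h1 h2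
  have hd : i - start n < plen n := by omega
  have h2n : 0 < 2^n := Nat.pow_pos (by norm_num)
  have hkeyp : pOf i = (i - start n) % 2^n + 1 := by unfold pOf; rw [hnOf]
  have hkeyr : rOf i = (i - start n) / 2^n + 1 := by unfold rOf; rw [hnOf]
  have hp : (i - start n) % 2 ^ n < 2^n := Nat.mod_lt _ h2n
  have hr : (i - start n) / 2 ^ n < 2^(6*n+3) := by
    rw [Nat.div_lt_iff_lt_mul h2n]
    have hpl : 2^(6*n+3) * 2^n = plen n := by unfold plen; rw [← pow_add]; congr 1; omega
    omega
  have hpat : inPat i := by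
    constructor
    · omega
    · rw [hnOf]; exact h2
  refine ⟨h1, h2, hnOf, ?_, ?_, ?_, ?_, hpat, ?_⟩
  · rw [hkeyp]; exact Nat.succ_le_succ (Nat.zero_le _)
  · rw [hkeyp]; exact hp
  · rw [hkeyr]; exact Nat.succ_le_succ (Nat.zero_le _)
  · rw [hkeyr]; exact hr
  · rw [tau, if_pos hpat, hnOf]

-- powers decompositions
lemma pow4 : (2:ℝ)^(4*n+4) = 16 * ((2:ℝ)^n)^4 := by
  rw [pow_add, ← pow_mul, mul_comm 4 n, pow_mul]; ring
lemma pow5 : (2:ℝ)^(5*n+4) = 16 * ((2:ℝ)^n)^5 := by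
  rw [pow_add, ← pow_mul, mul_comm 5 n, pow_mul]; ring
lemma pow6 : (2:ℝ)^(6*n+5) = 32 * ((2:ℝ)^n)^6 := by
  rw [pow_add, ← pow_mul, mul_comm 6 n, pow_mul]; ring

lemma xpos : (0:ℝ) < (2:ℝ)^n := by positivity

-- the key dot product identity between two pattern points
lemma QQ_pat {i : ℕ} (hi : PatFacts (n := n) i) :
    QQ n i = ![uu n i, (pOf i) * ((2:ℝ)^n)⁻¹] := by
  unfold QQ
  have := hi.hlo
  rw [if_neg (by omega), if_pos hi.hhi]

lemma dotID {i j : ℕ} (hi : PatFacts (n := n) i) (hj : PatFacts (n := n) j) :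
    dot (QQ n i - QQ n j) (XX i)
      = ((rOf i : ℝ) - rOf j) * ee n + ((pOf i : ℝ) - pOf j)^2 * ee n := by
  rw [QQ_pat hi, QQ_pat hj, dot, Fin.sum_univ_two]
  have h0 : (![uu n i, (pOf i) * ((2:ℝ)^n)⁻¹] - ![uu n j, (pOf j) * ((2:ℝ)^n)⁻¹]) 0
      = uu n i - uu n j := rfl
  have h1 : (![uu n i, (pOf i) * ((2:ℝ)^n)⁻¹] - ![uu n j, (pOf j) * ((2:ℝ)^n)⁻¹]) 1
      = (pOf i) * ((2:ℝ)^n)⁻¹ - (pOf j) * ((2:ℝ)^n)⁻¹ := rfl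
  have h2 : XX i 0 = 1 := rfl
  have h3 : XX i 1 = tau i := rfl
  rw [h0, h1, h2, h3, hi.htau]
  unfold uu cc ee
  rw [pow4, pow5, pow6]
  have hx : ((2:ℝ)^n) ≠ 0 := by positivity
  field_simp
  ring

lemma dotZero {i : ℕ} (hi : PatFacts (n := n) i) :
    dot (QQ n i - 0) (XX i) = cc n (rOf i) + ((pOf i : ℝ))^2 * ee n := by
  rw [QQ_pat hi, dot, Fin.sum_univ_two]
  have h0 : (![uu n i, (pOf i) * ((2:ℝ)^n)⁻¹] - 0) 0 = uu n i := by simp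
  have h1 : (![uu n i, (pOf i) * ((2:ℝ)^n)⁻¹] - 0) 1 = (pOf i) * ((2:ℝ)^n)⁻¹ := by simp
  have h2 : XX i 0 = 1 := rfl
  have h3 : XX i 1 = tau i := rfl
  rw [h0, h1, h2, h3, hi.htau]
  unfold uu cc ee
  rw [pow4, pow5, pow6]
  have hx : ((2:ℝ)^n) ≠ 0 := by positivity
  field_simp
  ring

lemma ee_le_half : ee n ≤ 1/2 := by
  unfold ee
  rw [inv_le_comm₀ (by positivity) (by norm_num)]
  calc (1/2:ℝ)⁻¹ = 2 := by norm_num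
    _ ≤ 2^(6*n+5) := by
        calc (2:ℝ) = 2^1 := (pow_one 2).symm
          _ ≤ 2^(6*n+5) := by
              apply pow_le_pow_right₀ (by norm_num) (by omega)

lemma one_le_x : (1:ℝ) ≤ (2:ℝ)^n := one_le_pow₀ (by norm_num)

lemma cc_bounds {r : ℕ} (hr : r ≤ 2^(6*n+3)) : 1/2 ≤ cc n r ∧ cc n r ≤ 3/4 := by
  have h1 : (0:ℝ) ≤ r := Nat.cast_nonneg r
  have h2 : (r:ℝ) * ee n ≤ 1/4 := by
    have hrc : (r:ℝ) ≤ (2:ℝ)^(6*n+3) := by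
      calc (r:ℝ) ≤ ((2^(6*n+3) : ℕ) : ℝ) := by exact_mod_cast hr
        _ = (2:ℝ)^(6*n+3) := by push_cast; ring
    have hee : (2:ℝ)^(6*n+3) * ee n = 1/4 := by
      unfold ee
      have : (2:ℝ)^(6*n+5) = 2^(6*n+3) * 4 := by
        rw [show 6*n+5 = (6*n+3)+2 by omega, pow_add]; norm_num
      rw [this]
      have hp : (0:ℝ) < 2^(6*n+3) := by positivity
      field_simp
    calc (r:ℝ) * ee n ≤ (2:ℝ)^(6*n+3) * ee n := by
          apply mul_le_mul_of_nonneg_right hrc (le_of_lt (ee_pos n))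
      _ = 1/4 := hee
  have h3 : 0 ≤ (r:ℝ) * ee n := mul_nonneg h1 (le_of_lt (ee_pos n))
  unfold cc
  constructor <;> linarith

lemma uu_bounds {i : ℕ} (hi : PatFacts (n := n) i) : 0 ≤ uu n i ∧ uu n i ≤ 1 := by
  have hcc := cc_bounds (n := n) hi.hrR
  have hx1 := one_le_x (n := n)
  have hxpos := xpos (n := n)
  have hpc : (pOf i : ℝ) ≤ (2:ℝ)^n := by
    calc (pOf i : ℝ) ≤ ((2^n : ℕ) : ℝ) := by exact_mod_cast hi.hpm
      _ = (2:ℝ)^n := by push_cast; ring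
  have hp0 : (0:ℝ) ≤ pOf i := Nat.cast_nonneg _
  have t1 : (pOf i : ℝ) * ((2:ℝ)^(5*n+4))⁻¹ ≤ 1/16 := by
    rw [pow5]
    have e1 : (2:ℝ)^n * (16 * ((2:ℝ)^n)^5)⁻¹ = (16 * ((2:ℝ)^n)^4)⁻¹ := by
      field_simp
    calc (pOf i : ℝ) * (16 * ((2:ℝ)^n)^5)⁻¹ ≤ (2:ℝ)^n * (16 * ((2:ℝ)^n)^5)⁻¹ := by
          apply mul_le_mul_of_nonneg_right hpc (by positivity)
      _ = (16 * ((2:ℝ)^n)^4)⁻¹ := e1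
      _ ≤ 1/16 := by
          rw [show (1/16 : ℝ) = (16:ℝ)⁻¹ by norm_num]
          apply inv_anti₀ (by norm_num)
          nlinarith [pow_le_pow_left₀ (by norm_num : (0:ℝ) ≤ 1) hx1 4, one_le_pow₀ hx1 (n := 4)]
  have t2 : (pOf i : ℝ)^2 * ((2:ℝ)^(6*n+5))⁻¹ ≤ 1/32 := by
    rw [pow6]
    have hp2 : (pOf i : ℝ)^2 ≤ ((2:ℝ)^n)^2 := by
      apply pow_le_pow_left₀ hp0 hpc
    have e1 : ((2:ℝ)^n)^2 * (32 * ((2:ℝ)^n)^6)⁻¹ = (32 * ((2:ℝ)^n)^4)⁻¹ := by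
      field_simp
    calc (pOf i : ℝ)^2 * (32 * ((2:ℝ)^n)^6)⁻¹ ≤ ((2:ℝ)^n)^2 * (32 * ((2:ℝ)^n)^6)⁻¹ := by
          apply mul_le_mul_of_nonneg_right hp2 (by positivity)
      _ = (32 * ((2:ℝ)^n)^4)⁻¹ := e1
      _ ≤ 1/32 := by
          rw [show (1/32 : ℝ) = (32:ℝ)⁻¹ by norm_num]
          apply inv_anti₀ (by norm_num)
          nlinarith [one_le_pow₀ hx1 (n := 4)]
  have t1' : 0 ≤ (pOf i : ℝ) * ((2:ℝ)^(5*n+4))⁻¹ := by positivity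
  have t2' : 0 ≤ (pOf i : ℝ)^2 * ((2:ℝ)^(6*n+5))⁻¹ := by positivity
  unfold uu
  constructor <;> linarith

lemma QQ_mem (hn1 : 1 ≤ n) : ∀ i t, QQ n i t ∈ Set.Icc (0:ℝ) 1 := by
  intro i t
  unfold QQ
  split
  · simp
  · split
    · next h1 h2 =>
      have hf := patFacts hn1 (by omega) h2
      have hu := uu_bounds hf
      have hpc : (pOf i : ℝ) ≤ (2:ℝ)^n := by
        calc (pOf i : ℝ) ≤ ((2^n : ℕ) : ℝ) := by exact_mod_cast hf.hpm
          _ = (2:ℝ)^n := by push_cast; ring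
      have hxpos := xpos (n := n)
      fin_cases t
      · simpa using hu
      · constructor
        · show (0:ℝ) ≤ (pOf i) * ((2:ℝ)^n)⁻¹
          positivity
        · show (pOf i : ℝ) * ((2:ℝ)^n)⁻¹ ≤ 1
          calc (pOf i : ℝ) * ((2:ℝ)^n)⁻¹ ≤ (2:ℝ)^n * ((2:ℝ)^n)⁻¹ := by
                apply mul_le_mul_of_nonneg_right hpc (by positivity)
            _ = 1 := mul_inv_cancel₀ (ne_of_gt hxpos)
    · fin_cases t <;> simp

lemma QQ_zero' (hn1 : 1 ≤ n) : QQ n 0 = 0 := by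
  unfold QQ
  rw [if_pos]
  unfold start
  positivity

lemma adQ (hn1 : 1 ≤ n) : admissibleQ (QQ n) := ⟨QQ_zero' hn1, QQ_mem hn1⟩

-- ordering of pattern indices
lemma pat_order (hn1 : 1 ≤ n) {i j : ℕ} (hi : PatFacts (n := n) i) (hj : PatFacts (n := n) j)
    (hij : j < i) : rOf j < rOf i ∨ (rOf j = rOf i ∧ pOf j < pOf i) := by
  have h2n : 0 < 2^n := Nat.pow_pos (by norm_num)
  have hdi := Nat.div_add_mod (i - start n) (2^n)
  have hdj := Nat.div_add_mod (j - start n) (2^n)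
  have hmi : (i - start n) % 2^n < 2^n := Nat.mod_lt _ h2n
  have hmj : (j - start n) % 2^n < 2^n := Nat.mod_lt _ h2n
  have hri : rOf i = (i - start n) / 2^n + 1 := by unfold rOf; rw [hi.hn]
  have hrj : rOf j = (j - start n) / 2^n + 1 := by unfold rOf; rw [hj.hn]
  have hpi : pOf i = (i - start n) % 2^n + 1 := by unfold pOf; rw [hi.hn]
  have hpj : pOf j = (j - start n) % 2^n + 1 := by unfold pOf; rw [hj.hn]
  have hlt : j - start n < i - start n := by
    have := hi.hlo; have := hj.hlo; omega
  rcases lt_trichotomy ((j - start n) / 2^n) ((i - start n) / 2^n) with h | h | h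
  · left; omega
  · right
    constructor
    · omega
    · rw [hpi, hpj]
      rw [h] at hdj
      have hgen : 2^n * ((i - start n) / 2^n) = 2^n * ((i - start n) / 2^n) := rfl
      omega
  · exfalso
    have := Nat.div_le_div_right (c := 2^n) (le_of_lt hlt)
    omega

lemma start_pos (nn : ℕ) : 0 < start nn := Nat.pow_pos (by norm_num)

lemma pat_y_ge (hn1 : 1 ≤ n) {i : ℕ} (hi : PatFacts (n := n) i) {j : ℕ} (hj : j < i) :
    ee n ≤ dot (QQ n i - QQ n j) (XX i) := by
  by_cases hjlo : j < start n
  · have hQj : QQ n j = 0 := by unfold QQ; rw [if_pos hjlo]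
    rw [hQj, dotZero hi]
    have hcc := (cc_bounds (n := n) hi.hrR).1
    have hp2 : (0:ℝ) ≤ (pOf i:ℝ)^2 * ee n := mul_nonneg (sq_nonneg _) (le_of_lt (ee_pos n))
    have := ee_le_half (n := n)
    linarith
  · have hjhi : j < start n + plen n := lt_of_lt_of_le (lt_of_lt_of_le hj (le_of_lt hi.hhi)) le_rfl
    have hjf := patFacts hn1 (by omega) hjhi
    rw [dotID hi hjf]
    have hee := ee_pos n
    rcases pat_order hn1 hi hjf hj with h | ⟨h1, h2⟩
    · have hr : (1:ℝ) ≤ (rOf i : ℝ) - rOf j := by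
        have hc : (rOf j:ℝ) + 1 ≤ rOf i := by exact_mod_cast h
        linarith
      have hsq : (0:ℝ) ≤ ((pOf i:ℝ) - pOf j)^2 * ee n := mul_nonneg (sq_nonneg _) (le_of_lt hee)
      nlinarith
    · have hc : (pOf j:ℝ) + 1 ≤ pOf i := by exact_mod_cast h2
      have hsq : (1:ℝ) ≤ ((pOf i:ℝ) - pOf j)^2 := by nlinarith
      rw [h1]
      have : ((rOf i : ℝ) - rOf i) = 0 := by ring
      rw [this, zero_mul, zero_add]
      nlinarith

lemma gap_nonempty {i : ℕ} (hi1 : 1 ≤ i) :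
    {y | ∃ j : ℕ, (j ∈ idx ⊤ ∨ j = 0) ∧ j < i ∧ y = dot (QQ n i - QQ n j) (XX i)}.Nonempty :=
  ⟨dot (QQ n i - QQ n 0) (XX i), 0, Or.inr rfl, by omega, rfl⟩

lemma gap_ge_eps (hn1 : 1 ≤ n) {i : ℕ} (hi : PatFacts (n := n) i) :
    ee n ≤ gapS (idx ⊤) XX (QQ n) i := by
  apply le_csInf (gap_nonempty (le_trans (start_pos n) hi.hlo))
  rintro y ⟨j, _, hj, rfl⟩
  exact pat_y_ge hn1 hi hj

lemma gap_nonneg (hn1 : 1 ≤ n) {i : ℕ} (hi1 : 1 ≤ i) :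
    0 ≤ gapS (idx ⊤) XX (QQ n) i := by
  apply le_csInf (gap_nonempty hi1)
  rintro y ⟨j, _, hj, rfl⟩
  by_cases hlo : i < start n
  · have hQi : QQ n i = 0 := by unfold QQ; rw [if_pos hlo]
    have hQj : QQ n j = 0 := by unfold QQ; rw [if_pos (by omega)]
    rw [hQi, hQj]
    simp [dot]
  · by_cases hhi : i < start n + plen n
    · exact le_trans (le_of_lt (ee_pos n)) (pat_y_ge hn1 (patFacts hn1 (by omega) hhi) hj)
    · have hQi : QQ n i = ![1,1] := by
        unfold QQ
        rw [if_neg hlo, if_neg hhi]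
      have hj0 := QQ_mem hn1 j 0
      have hj1 := QQ_mem hn1 j 1
      rw [Set.mem_Icc] at hj0 hj1
      rw [dot, Fin.sum_univ_two]
      have e0 : (QQ n i - QQ n j) 0 = 1 - QQ n j 0 := by rw [hQi]; rfl
      have e1 : (QQ n i - QQ n j) 1 = 1 - QQ n j 1 := by rw [hQi]; rfl
      have e2 : XX i 0 = 1 := rfl
      have e3 : XX i 1 = tau i := rfl
      rw [e0, e1, e2, e3]
      have ht := tau_nonneg i
      nlinarith [mul_nonneg (by linarith : (0:ℝ) ≤ 1 - QQ n j 1) ht]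

def mterm (nn : ℕ) : ℕ → ℝ :=
  (idx ⊤).indicator (fun i => gapS (idx ⊤) XX (QQ nn) i / norm1 (XX i))

lemma mterm_nonneg (hn1 : 1 ≤ n) (i : ℕ) : 0 ≤ mterm n i := by
  apply Set.indicator_nonneg
  intro j hjmem
  apply div_nonneg (gap_nonneg hn1 hjmem.1)
  rw [norm1_XX]
  have := tau_nonneg j
  linarith

lemma mterm_pat (hn1 : 1 ≤ n) {i : ℕ} (hi : PatFacts (n := n) i) :
    ee n / 2 ≤ mterm n i := by
  unfold mterm
  have hi1 : 1 ≤ i := le_trans (start_pos n) hi.hlo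
  rw [Set.indicator_of_mem (mem_idx_top hi1), norm1_XX]
  have h1 := tau_nonneg i
  have h2 := tau_le_one i
  apply div_le_div₀ (gap_nonneg hn1 hi1) (gap_ge_eps hn1 hi) (by linarith)
  linarith

lemma partial_ge (hn1 : 1 ≤ n) {M : ℕ} (hM : start n + plen n ≤ M) :
    ((plen n : ℝ)) * (ee n / 2) ≤ ∑ i ∈ Finset.range M, mterm n i := by
  have hsub : Finset.Ico (start n) (start n + plen n) ⊆ Finset.range M := by
    intro i hi
    rw [Finset.mem_Ico] at hi
    rw [Finset.mem_range]
    omega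
  calc ((plen n : ℝ)) * (ee n / 2)
      = (Finset.Ico (start n) (start n + plen n)).card • (ee n / 2) := by
        rw [Nat.card_Ico]
        rw [nsmul_eq_mul]
        congr 1
        congr 1
        omega
    _ ≤ ∑ i ∈ Finset.Ico (start n) (start n + plen n), mterm n i := by
        apply Finset.card_nsmul_le_sum
        intro i hi
        rw [Finset.mem_Ico] at hi
        exact mterm_pat hn1 (patFacts hn1 hi.1 hi.2)
    _ ≤ ∑ i ∈ Finset.range M, mterm n i := by
        apply Finset.sum_le_sum_of_subset_of_nonneg hsub
        intro i _ _
        exact mterm_nonneg hn1 i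

end Menu
theorem menu_unbounded (T : ℝ) :
    ∃ Q : ℕ → V 2, admissibleQ Q ∧ (T : EReal) ≤ menuGapS (idx ⊤) XX Q := by
  obtain ⟨N, hN⟩ := exists_nat_gt T
  set n := N + 3 with hn
  have hn1 : 1 ≤ n := by omega
  refine ⟨QQ n, adQ hn1, ?_⟩
  have hval : (2:ℝ)^N = ((plen n : ℝ)) * (ee n / 2) := by
    have e1 : ((plen n : ℕ) : ℝ) = (2:ℝ)^(7*n+3) := by unfold plen; push_cast; ring
    have e2 : (2:ℝ)^(7*n+3) = 2^(N) * 2^(6*n+5) * 2 := by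
      rw [← pow_add, mul_comm ((2:ℝ)^(N + (6*n+5))) 2, ← pow_succ']
      congr 1
      omega
    rw [e1, e2]
    unfold ee
    have hp : (0:ℝ) < 2^(6*n+5) := by positivity
    field_simp
  have hreal : ∀ M, start n + plen n ≤ M → T ≤ ∑ i ∈ Finset.range M, mterm n i := by
    intro M hM
    have h1 := partial_ge hn1 hM
    have h2 : (N:ℝ) < 2^N := by
      have := Nat.lt_two_pow_self (n := N)
      calc (N:ℝ) < ((2^N : ℕ) : ℝ) := by exact_mod_cast this
        _ = (2:ℝ)^N := by push_cast; ring
    rw [hval] at h2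
    linarith
  have hev : ∀ᶠ M in Filter.atTop,
      (T : EReal) ≤ ((∑ i ∈ Finset.range M, mterm n i : ℝ) : EReal) := by
    rw [Filter.eventually_atTop]
    exact ⟨start n + plen n, fun M hM => EReal.coe_le_coe_iff.mpr (hreal M hM)⟩
  have heq : menuGapS (idx ⊤) XX (QQ n)
      = Filter.limsup (fun M => ((∑ i ∈ Finset.range M, mterm n i : ℝ) : EReal)) Filter.atTop := rfl
  rw [heq]
  exact Filter.le_limsup_of_frequently_le hev.frequently


theorem stmt1 :
    ∃ X : ℕ → V 2,
      (∀ i ∈ idx ⊤, X i ≠ 0 ∧ ∀ t, X i t ∈ Set.Icc (0:ℝ) 1) ∧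
      (∀ c : ℕ → ℝ, admissibleC (idx ⊤) X c → alignGapE (idx ⊤) X c ≤ 6) ∧
      (∀ T : ℝ, ∃ Q : ℕ → V 2, admissibleQ Q ∧ (T : EReal) ≤ menuGapS (idx ⊤) X Q) := by
  refine ⟨XX, ?_, ?_, ?_⟩
  · intro i _
    constructor
    · intro h
      have h0 : XX i 0 = 0 := by rw [h]; rfl
      have h1 : XX i 0 = 1 := rfl
      rw [h1] at h0
      exact one_ne_zero h0
    · intro t
      fin_cases t
      · exact ⟨zero_le_one, le_refl 1⟩
      · exact ⟨tau_nonneg i, tau_le_one i⟩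
  · intro c hc
    exact align_bound hc
  · exact menu_unbounded

end Stmt1
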